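/- arXiv:1506.03613 — 2 statements merged into one kernel-verified Lean document; each statement's English description precedes it below -/
import Mathlib

section
/- Let σ : V × V → V satisfy σ(x,y) ∈ N[x] for all x,y ∈ V, and let T ∈ ℕ be such that σ guarantees capture within T rounds in the turn-based game: for all x₀,y₀ ∈ V and every sequence (y_t)_{t≥0} with y_{t+1} ∈ N[y_t] for all t, the sequence defined by x_{t+1} = σ(x_t, y_t) satisfies x_{t+1} = y_t for some t < T. Let π_C^# be the memoryless randomized cop strategy in the concurrent game defined by: from position (x,y), sample a vertex v uniformly at random from N[y] and move the cop to σ(x,v). Then for every robber strategy π_R, every initial position (x,y) ∈ V², and every k ∈ ℕ, the probability (under the play measure induced by π_C^#, π_R, and (x,y)) that the robber has not been captured during the first k·T rounds is at most (1 − (1/n)^T)^k, where n = |V|. -/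
open Finset Filter

noncomputable section

variable {V : Type*} [Fintype V] [DecidableEq V]

/-- The closed neighborhood `N[u]` of a vertex `u`: `u` together with its neighbors. -/
def nbhd (G : SimpleGraph V) [DecidableRel G.Adj] (u : V) : Finset V :=
  insert u (G.neighborFinset u)

lemma nbhd_nonempty (G : SimpleGraph V) [DecidableRel G.Adj] (u : V) :
    (nbhd G u).Nonempty :=
  ⟨u, Finset.mem_insert_self u _⟩

/-! ### The single-cop concurrent game, with the expected-capture-time payoff -/

/-- A randomized strategy in the single-cop concurrent game: to each finite history of
positions (cop location, robber location) it assigns a distribution over next moves. -/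
abbrev Strat (V : Type*) := List (V × V) → PMF V

/-- A strategy is memoryless if the distribution it assigns depends only on the
current (most recent) position. -/
def Memoryless (π : Strat V) : Prop :=
  ∀ h₁ h₂ : List (V × V), h₁.getLast? = h₂.getLast? → π h₁ = π h₂

/-- The single-cop CCCR transition function: simultaneous moves within closed
neighborhoods (illegal moves ignored), capture positions are absorbing, and a swap of
adjacent vertices is an \"en passant\" capture. -/
def step1 (G : SimpleGraph V) [DecidableRel G.Adj] (p : V × V) (u w : V) : V × V :=
  if p.1 = p.2 then p
  else
    let u' := if u ∈ nbhd G p.1 then u else p.1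
    let w' := if w ∈ nbhd G p.2 then w else p.2
    if u' = p.2 ∧ w' = p.1 then (u', u') else (u', w')

/-- The distribution over histories of the first `t+1` positions, induced by the
strategies `πC, πR` and the initial position `init`. -/
def play1 (G : SimpleGraph V) [DecidableRel G.Adj]
    (πC πR : Strat V) (init : V × V) : ℕ → PMF (List (V × V))
  | 0 => PMF.pure [init]
  | (t+1) => (play1 G πC πR init t).bind fun h =>
      (πC h).bind fun u => (πR h).bind fun w =>
        PMF.pure (h ++ [step1 G (h.getLast?.getD init) u w])

/-- The probability that cop and robber occupy different vertices at time `t`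
(capture is absorbing, so this is the probability that the robber is still free). -/
def freeProb1 (G : SimpleGraph V) [DecidableRel G.Adj]
    (πC πR : Strat V) (init : V × V) (t : ℕ) : ENNReal :=
  (play1 G πC πR init t).toOuterMeasure
    {h | (h.getLast?.getD init).1 ≠ (h.getLast?.getD init).2}

/-- The payoff: the expected number of rounds `t ≥ 0` at which cop and robber occupy
different vertices, i.e. the expected capture time. -/
def payoff (G : SimpleGraph V) [DecidableRel G.Adj]
    (πC πR : Strat V) (init : V × V) : ENNReal :=
  ∑' t : ℕ, freeProb1 G πC πR init t

/-- The (upper) value of the game started at `init`; the cop minimizes and the robber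
maximizes the expected capture time. -/
def gameValue (G : SimpleGraph V) [DecidableRel G.Adj] (init : V × V) : ENNReal :=
  ⨅ πC : Strat V, ⨆ πR : Strat V, payoff G πC πR init

/-- The cop trajectory generated in the turn-based game by the positional cop strategy
`σ` from initial cop position `x₀`, against robber trajectory `ys`:
`x_{t+1} = σ (x_t, y_t)`. -/
def copSeq (σ : V × V → V) (x₀ : V) (ys : ℕ → V) : ℕ → V
  | 0 => x₀
  | (t+1) => σ (copSeq σ x₀ ys t, ys t)

/-- The memoryless randomized cop strategy `π_C^#` for the concurrent game: from
position `(x, y)`, sample a vertex `v` uniformly at random from `N[y]` and move the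
cop to `σ (x, v)`. -/
def piCSharp (G : SimpleGraph V) [DecidableRel G.Adj] [Nonempty V]
    (σ : V × V → V) : Strat V := fun h =>
  match h.getLast? with
  | some p => (PMF.uniformOfFinset (nbhd G p.2) (nbhd_nonempty G p.2)).map fun v => σ (p.1, v)
  | none => PMF.uniformOfFintype V

namespace CCCRAux

variable (G : SimpleGraph V) [DecidableRel G.Adj]

lemma self_mem_nbhd (u : V) : u ∈ nbhd G u := Finset.mem_insert_self _ _

/-- Current position of a history, given the initial position. -/
def curP (init : V × V) (h : List (V × V)) : V × V := h.getLast?.getD init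

/-- One step of the "lucky" evolution: either the position was already a capture and
stays put, or the robber moved legally and either the cop responded with `σ` to the
robber's actual move, or a capture happened. -/
def stepOk (σ : V × V → V) (p q : V × V) : Prop :=
  if p.1 = p.2 then q = p
  else q.2 ∈ nbhd G p.2 ∧ (q.1 = σ (p.1, q.2) ∨ q.1 = q.2)

def okL (σ : V × V → V) : V × V → List (V × V) → Prop
  | _, [] => True
  | p, q :: l => stepOk G σ p q ∧ okL σ q l

lemma okL_append (σ : V × V → V) :
    ∀ (l : List (V × V)) (p q : V × V), okL G σ p l → stepOk G σ (l.getLastD p) q →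
      okL G σ p (l ++ [q]) := by
  intro l
  induction l with
  | nil => intro p q _ hs; exact ⟨by simpa using hs, trivial⟩
  | cons r l ih =>
      intro p q hok hs
      rw [List.getLastD_cons] at hs
      exact ⟨hok.1, ih r q hok.2 hs⟩

lemma okL_captured_end (σ : V × V → V) :
    ∀ (l : List (V × V)) (p : V × V), okL G σ p l → ∀ q ∈ p :: l, q.1 = q.2 →
      (l.getLastD p).1 = (l.getLastD p).2 := by
  intro l
  induction l with
  | nil => intro p _ q hq hcap; simp at hq; simpa [hq] using hcap
  | cons r l ih =>
      intro p hok q hq hcap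
      rw [List.getLastD_cons]
      rcases List.mem_cons.1 hq with rfl | hq'
      · -- q = p is captured, so r = p by stepOk, and r is captured
        have hr : r = q := by
          have := hok.1; simpa [stepOk, hcap] using this
        exact ih r hok.2 r List.mem_cons_self (by rw [hr]; exact hcap)
      · exact ih r hok.2 q hq' hcap

lemma getD_length_cons : ∀ (l : List (V × V)) (p d : V × V),
    (p :: l).getD l.length d = l.getLastD p := by
  intro l
  induction l with
  | nil => intro p d; simp [List.getD]
  | cons q l ih =>
      intro p d
      simp only [List.length_cons, List.getD_cons_succ, List.getLastD_cons]
      exact ih q d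

lemma okL_chain (σ : V × V → V) :
    ∀ (l : List (V × V)) (p d : V × V) (i : ℕ), okL G σ p l → i < l.length →
      stepOk G σ ((p :: l).getD i d) ((p :: l).getD (i+1) d) := by
  intro l
  induction l with
  | nil => intro p d i _ hi; simp at hi
  | cons q l ih =>
      intro p d i hok hi
      cases i with
      | zero => simpa [List.getD] using hok.1
      | succ i =>
          have := ih q d i hok.2 (by simpa using hi)
          simpa [List.getD] using this

/-- Key combinatorial lemma: a `σ`-chain of length `T` starting at a free position
ends at a capture. -/
lemma ok_capture (σ : V × V → V) (T : ℕ)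
    (hT : ∀ (x₀ : V) (ys : ℕ → V), (∀ t, ys (t+1) ∈ nbhd G (ys t)) →
      ∃ t < T, copSeq σ x₀ ys (t+1) = ys t)
    (p : V × V) (l : List (V × V)) (hok : okL G σ p l) (hlen : l.length = T)
    (hfree : p.1 ≠ p.2) : (l.getLastD p).1 = (l.getLastD p).2 := by
  by_contra hend
  have hallfree : ∀ q ∈ p :: l, q.1 ≠ q.2 := by
    intro q hq hcap
    exact hend (okL_captured_end G σ l p hok q hq hcap)
  set e := l.getLastD p with he
  set z : ℕ → V × V := fun i => (p :: l).getD i e with hz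
  have hz0 : z 0 = p := rfl
  have hzlast : z l.length = e := getD_length_cons l p e
  have hzbig : ∀ i, l.length ≤ i → z i = e := by
    intro i hi
    rcases Nat.eq_or_lt_of_le hi with rfl | hi'
    · exact hzlast
    · exact List.getD_eq_default _ _ (by simpa using hi')
  have hmem : ∀ i, i ≤ l.length → z i ∈ p :: l := by
    intro i hi
    have hi' : i < (p :: l).length := by simpa using Nat.lt_succ_of_le hi
    rw [hz]
    simp only [List.getD_eq_getElem _ _ hi']
    exact List.getElem_mem _
  have hchain : ∀ i, i < l.length → stepOk G σ (z i) (z (i+1)) :=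
    fun i hi => okL_chain G σ l p e i hok hi
  have hnb : ∀ i, (z (i+1)).2 ∈ nbhd G (z i).2 := by
    intro i
    rcases lt_or_ge i l.length with hi | hi
    · have hs := hchain i hi
      by_cases hc : (z i).1 = (z i).2
      · have : z (i+1) = z i := by simpa [stepOk, hc] using hs
        rw [this]; exact self_mem_nbhd G _
      · exact ((by simpa [stepOk, hc] using hs : _ ∧ _)).1
    · rw [hzbig i hi, hzbig (i+1) (le_trans hi (Nat.le_succ i))]
      exact self_mem_nbhd G _
  set ys : ℕ → V := fun i => (z (i+1)).2 with hys
  have hysnb : ∀ t, ys (t+1) ∈ nbhd G (ys t) := fun t => hnb (t+1)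
  have hcop : ∀ s, s ≤ l.length → copSeq σ p.1 ys s = (z s).1 := by
    intro s
    induction s with
    | zero => intro _; simp [copSeq, hz0]
    | succ s ihs =>
        intro hs
        have hslt : s < l.length := hs
        have hzfree : (z s).1 ≠ (z s).2 := hallfree _ (hmem s (le_of_lt hslt))
        have hzfree' : (z (s+1)).1 ≠ (z (s+1)).2 := hallfree _ (hmem (s+1) hs)
        have hstep := hchain s hslt
        have hstep' : (z (s+1)).2 ∈ nbhd G (z s).2 ∧
            ((z (s+1)).1 = σ ((z s).1, (z (s+1)).2) ∨ (z (s+1)).1 = (z (s+1)).2) := by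
          simpa [stepOk, hzfree] using hstep
        have h1 : (z (s+1)).1 = σ ((z s).1, (z (s+1)).2) :=
          hstep'.2.resolve_right hzfree'
        show σ (copSeq σ p.1 ys s, ys s) = (z (s+1)).1
        rw [ihs (le_of_lt hslt), h1]
  obtain ⟨t, htT, hcap⟩ := hT p.1 ys hysnb
  have ht1 : t + 1 ≤ l.length := by omega
  have : (z (t+1)).1 = (z (t+1)).2 := by
    rw [← hcop (t+1) ht1]; exact hcap
  exact hallfree _ (hmem (t+1) ht1) this


/-! ### Continuation distributions -/

def cont (πC πR : Strat V) (init : V × V) (h : List (V × V)) : ℕ → PMF (List (V × V))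
  | 0 => PMF.pure h
  | (m+1) => (cont πC πR init h m).bind fun h' =>
      (πC h').bind fun u => (πR h').bind fun w =>
        PMF.pure (h' ++ [step1 G (h'.getLast?.getD init) u w])

lemma play1_add (πC πR : Strat V) (init : V × V) (t : ℕ) :
    ∀ m, play1 G πC πR init (t + m) =
      (play1 G πC πR init t).bind fun h => cont G πC πR init h m := by
  intro m
  induction m with
  | zero => simp [cont, PMF.bind_pure]
  | succ m ih =>
      show play1 G πC πR init ((t + m) + 1) = _
      rw [play1, ih, PMF.bind_bind]
      rfl

lemma curP_append (init : V × V) (h l : List (V × V)) :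
    curP init (h ++ l) = l.getLastD (curP init h) := by
  cases l with
  | nil => simp [curP]
  | cons q l' =>
      unfold curP
      rw [List.getLastD_eq_getLast?, List.getLast?_append]
      cases hq : (q :: l').getLast? with
      | none => simp at hq
      | some x => simp [hq]

lemma curP_concat (init : V × V) (h : List (V × V)) (q : V × V) :
    curP init (h ++ [q]) = q := by
  simp [curP_append]

/-- The event that the first `m` steps of the continuation follow a `σ`-chain. -/
def contSet (σ : V × V → V) (init : V × V) (h : List (V × V)) (m : ℕ) :
    Set (List (V × V)) :=
  {h' | ∃ l, h' = h ++ l ∧ l.length = m ∧ okL G σ (curP init h) l}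

def freeSet (init : V × V) : Set (List (V × V)) :=
  {h' | (curP init h').1 ≠ (curP init h').2}


lemma one_step_bound [Nonempty V] (σ : V × V → V) (hσ : ∀ x y : V, σ (x, y) ∈ nbhd G x)
    (ρ : PMF V) (init : V × V) (h' : List (V × V)) (S : Set (List (V × V)))
    (hS : ∀ u w, stepOk G σ (curP init h') (step1 G (curP init h') u w) →
      (h' ++ [step1 G (curP init h') u w]) ∈ S) :
    ((Fintype.card V : ENNReal))⁻¹ ≤
      ((piCSharp G σ h').bind fun u => ρ.bind fun w =>
        PMF.pure (h' ++ [step1 G (curP init h') u w])).toOuterMeasure S := by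
  classical
  set p' := curP init h' with hp'
  set πC := piCSharp G σ h' with hπC
  set χ : V → V → ENNReal := fun u w =>
    if (h' ++ [step1 G p' u w]) ∈ S then 1 else 0 with hχ
  have hmeas : ((πC).bind fun u => ρ.bind fun w =>
      PMF.pure (h' ++ [step1 G p' u w])).toOuterMeasure S
      = ∑' w, ρ w * ∑' u, πC u * χ u w := by
    rw [PMF.toOuterMeasure_bind_apply]
    calc (∑' u, πC u * (ρ.bind fun w =>
            PMF.pure (h' ++ [step1 G p' u w])).toOuterMeasure S)
        = ∑' u, πC u * ∑' w, ρ w * χ u w := by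
          refine tsum_congr fun u => ?_
          rw [PMF.toOuterMeasure_bind_apply]
          congr 1
          refine tsum_congr fun w => ?_
          rw [PMF.toOuterMeasure_pure_apply]
      _ = ∑' u, ∑' w, πC u * (ρ w * χ u w) := by
          refine tsum_congr fun u => ?_
          rw [ENNReal.tsum_mul_left]
      _ = ∑' w, ∑' u, πC u * (ρ w * χ u w) := ENNReal.tsum_comm
      _ = ∑' w, ρ w * ∑' u, πC u * χ u w := by
          refine tsum_congr fun w => ?_
          rw [show (fun u => πC u * (ρ w * χ u w)) = fun u => ρ w * (πC u * χ u w) from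
            funext fun u => by ring, ENNReal.tsum_mul_left]
  rw [hmeas]
  have hinner : ∀ w, ((Fintype.card V : ENNReal))⁻¹ ≤ ∑' u, πC u * χ u w := by
    intro w
    by_cases hc : p'.1 = p'.2
    · have hall : ∀ u, χ u w = 1 := by
        intro u
        have hst : step1 G p' u w = p' := by simp [step1, hc]
        have hok : stepOk G σ p' (step1 G p' u w) := by simp [stepOk, hc, hst]
        simp [hχ, hS u w hok]
      calc ((Fintype.card V : ENNReal))⁻¹ ≤ 1 := by
            apply ENNReal.inv_le_one.2
            exact_mod_cast Nat.one_le_iff_ne_zero.2 Fintype.card_ne_zero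
        _ = ∑' u, πC u * χ u w := by
            simp only [hall, mul_one]
            exact (PMF.tsum_coe πC).symm
    · set w' : V := if w ∈ nbhd G p'.2 then w else p'.2 with hw'def
      have hw' : w' ∈ nbhd G p'.2 := by
        rw [hw'def]; split
        · assumption
        · exact self_mem_nbhd G _
      set u₀ : V := σ (p'.1, w') with hu₀
      have hstep : step1 G p' u₀ w =
          if u₀ = p'.2 ∧ w' = p'.1 then (u₀, u₀) else (u₀, w') := by
        rw [step1]
        simp only [hc, if_false, (show u₀ ∈ nbhd G p'.1 from hσ p'.1 w'), if_true, ← hw'def]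
      have hok : stepOk G σ p' (step1 G p' u₀ w) := by
        rw [hstep]
        by_cases hsw : u₀ = p'.2 ∧ w' = p'.1
        · rw [if_pos hsw]
          simp only [stepOk, hc, if_false]
          exact ⟨by rw [hsw.1]; exact self_mem_nbhd G _, by simp⟩
        · rw [if_neg hsw]
          simp only [stepOk, hc, if_false]
          exact ⟨hw', by simp [hu₀]⟩
      have hχ₀ : χ u₀ w = 1 := by simp [hχ, hS u₀ w hok]
      have hle : ((Fintype.card V : ENNReal))⁻¹ ≤ πC u₀ := by
        rw [hπC, piCSharp]
        cases hlast : h'.getLast? with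
        | none => simp [PMF.uniformOfFintype_apply]
        | some p'' =>
            have hpp : p' = p'' := by rw [hp', curP, hlast]; rfl
            simp only
            rw [PMF.map_apply]
            refine le_trans ?_ (ENNReal.le_tsum w')
            rw [if_pos (by rw [hu₀, hpp])]
            rw [PMF.uniformOfFinset_apply]
            rw [if_pos (by rw [← hpp]; exact hw')]
            apply ENNReal.inv_le_inv.2
            exact_mod_cast Finset.card_le_univ _
      calc ((Fintype.card V : ENNReal))⁻¹ ≤ πC u₀ * χ u₀ w := by
            rw [hχ₀, mul_one]; exact hle
        _ ≤ ∑' u, πC u * χ u w := ENNReal.le_tsum u₀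
  calc ((Fintype.card V : ENNReal))⁻¹
      = ∑' w, ρ w * ((Fintype.card V : ENNReal))⁻¹ := by
        rw [ENNReal.tsum_mul_right, PMF.tsum_coe, one_mul]
    _ ≤ ∑' w, ρ w * ∑' u, πC u * χ u w :=
        ENNReal.tsum_le_tsum fun w => mul_le_mul_right (hinner w) _

lemma mass_contSet [Nonempty V] (σ : V × V → V) (hσ : ∀ x y : V, σ (x, y) ∈ nbhd G x)
    (πR : Strat V) (init : V × V) :
    ∀ (m : ℕ) (h : List (V × V)),
      ((Fintype.card V : ENNReal))⁻¹ ^ m ≤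
        (cont G (piCSharp G σ) πR init h m).toOuterMeasure (contSet G σ init h m) := by
  intro m
  induction m with
  | zero =>
      intro h
      rw [pow_zero, cont, PMF.toOuterMeasure_pure_apply]
      rw [if_pos ⟨[], by simp, rfl, trivial⟩]
  | succ m ih =>
      intro h
      rw [cont, PMF.toOuterMeasure_bind_apply]
      have key : ∀ h' ∈ contSet G σ init h m,
          ((Fintype.card V : ENNReal))⁻¹ ≤
            ((piCSharp G σ h').bind fun u => (πR h').bind fun w =>
              PMF.pure (h' ++ [step1 G (h'.getLast?.getD init) u w])).toOuterMeasure
              (contSet G σ init h (m+1)) := by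
        rintro h' ⟨l, rfl, hlen, hok⟩
        have hcur : curP init (h ++ l) = l.getLastD (curP init h) := curP_append init h l
        have := one_step_bound G σ hσ (πR (h ++ l)) init (h ++ l)
          (contSet G σ init h (m+1)) ?_
        · exact this
        · intro u w hstep
          refine ⟨l ++ [step1 G (curP init (h ++ l)) u w], by rw [List.append_assoc], by
            simp [hlen], ?_⟩
          refine okL_append G σ l _ _ hok ?_
          rw [← hcur]
          exact hstep
      calc ((Fintype.card V : ENNReal))⁻¹ ^ (m+1)
          = ((Fintype.card V : ENNReal))⁻¹ ^ m * ((Fintype.card V : ENNReal))⁻¹ := pow_succ _ _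
        _ ≤ (cont G (piCSharp G σ) πR init h m).toOuterMeasure (contSet G σ init h m) *
              ((Fintype.card V : ENNReal))⁻¹ := mul_le_mul_left (ih h) _
        _ = ∑' h', (contSet G σ init h m).indicator (cont G (piCSharp G σ) πR init h m) h' *
              ((Fintype.card V : ENNReal))⁻¹ := by
            rw [ENNReal.tsum_mul_right, PMF.toOuterMeasure_apply]
        _ ≤ _ := by
            refine ENNReal.tsum_le_tsum fun h' => ?_
            by_cases hmem : h' ∈ contSet G σ init h m
            · rw [Set.indicator_of_mem hmem]
              exact mul_le_mul_right (key h' hmem) _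
            · rw [Set.indicator_of_notMem hmem, zero_mul]
              exact zero_le

lemma captured_absorb (πC πR : Strat V) (init : V × V) :
    ∀ (m : ℕ) (h : List (V × V)), (curP init h).1 = (curP init h).2 →
      ∀ h' ∈ (cont G πC πR init h m).support, curP init h' = curP init h := by
  intro m
  induction m with
  | zero =>
      intro h _ h' hh'
      rw [cont, PMF.support_pure] at hh'
      rw [hh']
  | succ m ih =>
      intro h hcap h'' hh''
      rw [cont, PMF.mem_support_bind_iff] at hh''
      obtain ⟨h', hh', hmem⟩ := hh''
      rw [PMF.mem_support_bind_iff] at hmem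
      obtain ⟨u, _, hmem⟩ := hmem
      rw [PMF.mem_support_bind_iff] at hmem
      obtain ⟨w, _, hmem⟩ := hmem
      rw [PMF.mem_support_pure_iff] at hmem
      have hh'' := hmem
      have hcur' : curP init h' = curP init h := ih h hcap h' hh'
      have hstep : step1 G (h'.getLast?.getD init) u w = curP init h' := by
        have : (curP init h').1 = (curP init h').2 := by rw [hcur']; exact hcap
        show step1 G (curP init h') u w = curP init h'
        simp [step1, this]
      rw [hh'', curP_concat, hstep, hcur']

lemma block_free [Nonempty V] (σ : V × V → V) (hσ : ∀ x y : V, σ (x, y) ∈ nbhd G x)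
    (T : ℕ)
    (hT : ∀ (x₀ : V) (ys : ℕ → V), (∀ t, ys (t+1) ∈ nbhd G (ys t)) →
      ∃ t < T, copSeq σ x₀ ys (t+1) = ys t)
    (πR : Strat V) (init : V × V) (h : List (V × V))
    (hfree : (curP init h).1 ≠ (curP init h).2) :
    (cont G (piCSharp G σ) πR init h T).toOuterMeasure (freeSet init) ≤
      1 - ((Fintype.card V : ENNReal))⁻¹ ^ T := by
  set μ := cont G (piCSharp G σ) πR init h T with hμ
  have hdisj : ∀ x, x ∈ freeSet init → x ∈ contSet G σ init h T → False := by
    rintro x hxF ⟨l, rfl, hlen, hok⟩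
    have hcapend := ok_capture G σ T hT (curP init h) l hok hlen hfree
    rw [← curP_append init h l] at hcapend
    exact hxF hcapend
  have hsum : μ.toOuterMeasure (freeSet init) + μ.toOuterMeasure (contSet G σ init h T) ≤ 1 := by
    rw [PMF.toOuterMeasure_apply, PMF.toOuterMeasure_apply, ← ENNReal.tsum_add]
    calc (∑' x, ((freeSet init).indicator μ x + (contSet G σ init h T).indicator μ x))
        ≤ ∑' x, μ x := by
          refine ENNReal.tsum_le_tsum fun x => ?_
          by_cases hx : x ∈ freeSet init
          · rw [Set.indicator_of_mem hx,
              Set.indicator_of_notMem (fun hx' => hdisj x hx hx'), add_zero]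
          · rw [Set.indicator_of_notMem hx, zero_add]
            by_cases hx' : x ∈ contSet G σ init h T
            · rw [Set.indicator_of_mem hx']
            · rw [Set.indicator_of_notMem hx']; exact zero_le
      _ = 1 := μ.tsum_coe
  have h1 : μ.toOuterMeasure (freeSet init) ≤ 1 - μ.toOuterMeasure (contSet G σ init h T) :=
    ENNReal.le_sub_of_add_le_right (ne_top_of_le_ne_top ENNReal.one_ne_top
      (le_trans le_add_self hsum)) hsum
  refine le_trans h1 (tsub_le_tsub_left ?_ 1)
  exact mass_contSet G σ hσ πR init T h

lemma block_captured (πC πR : Strat V) (init : V × V) (m : ℕ) (h : List (V × V))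
    (hcap : (curP init h).1 = (curP init h).2) :
    (cont G πC πR init h m).toOuterMeasure (freeSet init) = 0 := by
  rw [PMF.toOuterMeasure_apply_eq_zero_iff]
  rw [Set.disjoint_left]
  intro x hx hxF
  have := captured_absorb G πC πR init m h hcap x hx
  exact hxF (by rw [this]; exact hcap)

lemma recur_bound [Nonempty V] (σ : V × V → V) (hσ : ∀ x y : V, σ (x, y) ∈ nbhd G x)
    (T : ℕ)
    (hT : ∀ (x₀ : V) (ys : ℕ → V), (∀ t, ys (t+1) ∈ nbhd G (ys t)) →
      ∃ t < T, copSeq σ x₀ ys (t+1) = ys t)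
    (πR : Strat V) (init : V × V) (t : ℕ) :
    freeProb1 G (piCSharp G σ) πR init (t + T) ≤
      (1 - ((Fintype.card V : ENNReal))⁻¹ ^ T) * freeProb1 G (piCSharp G σ) πR init t := by
  set c : ENNReal := 1 - ((Fintype.card V : ENNReal))⁻¹ ^ T with hc
  set πC := piCSharp G σ with hπC
  show (play1 G πC πR init (t + T)).toOuterMeasure (freeSet init) ≤
    c * (play1 G πC πR init t).toOuterMeasure (freeSet init)
  rw [play1_add, PMF.toOuterMeasure_bind_apply]
  calc (∑' h, play1 G πC πR init t h *
          (cont G πC πR init h T).toOuterMeasure (freeSet init))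
      ≤ ∑' h, c * (freeSet init).indicator (play1 G πC πR init t) h := by
        refine ENNReal.tsum_le_tsum fun h => ?_
        by_cases hfree : h ∈ freeSet init
        · rw [Set.indicator_of_mem hfree]
          calc play1 G πC πR init t h *
                (cont G πC πR init h T).toOuterMeasure (freeSet init)
              ≤ play1 G πC πR init t h * c :=
                mul_le_mul_right (block_free G σ hσ T hT πR init h hfree) _
            _ = c * play1 G πC πR init t h := mul_comm _ _
        · rw [Set.indicator_of_notMem hfree, mul_zero]
          have : (curP init h).1 = (curP init h).2 := not_not.1 hfree
          rw [block_captured G πC πR init T h this, mul_zero]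
    _ = c * ∑' h, (freeSet init).indicator (play1 G πC πR init t) h := ENNReal.tsum_mul_left
    _ = c * (play1 G πC πR init t).toOuterMeasure (freeSet init) := by
        rw [PMF.toOuterMeasure_apply]
end CCCRAux

/-- if the positional cop strategy `σ` guarantees capture within `T`
rounds in the turn-based game, then under the memoryless randomized strategy `π_C^#`
(guess the robber's next move uniformly in `N[y]` and respond with `σ`), for every
robber strategy, every initial position and every `k`, the probability that the robber
is still free after `k·T` rounds is at most `(1 - (1/n)^T)^k`, where `n = |V|`. -/
theorem freeProb_le_of_guessing (G : SimpleGraph V) [DecidableRel G.Adj] [Nonempty V]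
    (hconn : G.Connected) (σ : V × V → V) (hσ : ∀ x y : V, σ (x, y) ∈ nbhd G x) (T : ℕ)
    (hT : ∀ (x₀ : V) (ys : ℕ → V), (∀ t, ys (t+1) ∈ nbhd G (ys t)) →
      ∃ t < T, copSeq σ x₀ ys (t+1) = ys t) :
    ∀ (πR : Strat V) (init : V × V) (k : ℕ),
      freeProb1 G (piCSharp G σ) πR init (k * T) ≤
        (1 - ((Fintype.card V : ENNReal))⁻¹ ^ T) ^ k := by
  intro πR init k
  induction k with
  | zero =>
      rw [zero_mul, pow_zero]
      show (play1 G (piCSharp G σ) πR init 0).toOuterMeasure _ ≤ 1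
      rw [play1, PMF.toOuterMeasure_pure_apply]
      split <;> simp
  | succ k ih =>
      rw [Nat.succ_mul]
      calc freeProb1 G (piCSharp G σ) πR init (k * T + T)
          ≤ (1 - ((Fintype.card V : ENNReal))⁻¹ ^ T) *
              freeProb1 G (piCSharp G σ) πR init (k * T) :=
            CCCRAux.recur_bound G σ hσ T hT πR init (k * T)
        _ ≤ (1 - ((Fintype.card V : ENNReal))⁻¹ ^ T) *
              (1 - ((Fintype.card V : ENNReal))⁻¹ ^ T) ^ k := mul_le_mul_right ih _
        _ = (1 - ((Fintype.card V : ENNReal))⁻¹ ^ T) ^ (k+1) := by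
            rw [pow_succ, mul_comm]
end
end

section
/- For every finite, simple, connected, undirected graph G and every initial position (x,y) ∈ V², the single-cop concurrent cops and robber game with the expected-capture-time payoff has a value: inf_{π_C} sup_{π_R} v_{(x,y)}(π_C, π_R) = sup_{π_R} inf_{π_C} v_{(x,y)}(π_C, π_R) (as elements of [0,∞]). -/
open Finset Filter
open scoped ENNReal Topology

noncomputable section

variable {V : Type*} [Fintype V] [DecidableEq V]

/-! ### Infrastructure -/

lemma bindE {α β : Type*} (p : PMF α) (f : α → PMF β) (F : β → ℝ≥0∞) :
    ∑' b, (p.bind f) b * F b = ∑' a, p a * ∑' b, (f a) b * F b := by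
  simp only [PMF.bind_apply]
  calc ∑' b, (∑' a, p a * (f a) b) * F b
      = ∑' b, ∑' a, p a * (f a) b * F b := by
        congr 1; funext b; rw [ENNReal.tsum_mul_right]
    _ = ∑' a, ∑' b, p a * (f a) b * F b := ENNReal.tsum_comm
    _ = ∑' a, p a * ∑' b, (f a) b * F b := by
        congr 1; funext a
        rw [← ENNReal.tsum_mul_left]
        congr 1; funext b; ring

lemma pureE {β : Type*} (x : β) (F : β → ℝ≥0∞) :
    ∑' b, (PMF.pure x) b * F b = F x := by
  rw [tsum_eq_single x]
  · simp [PMF.pure_apply]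
  · intro b hb; simp [PMF.pure_apply, hb]

section Game

variable (G : SimpleGraph V) [DecidableRel G.Adj]

/-- current position of a history -/
def cur (init : V × V) (h : List (V × V)) : V × V := h.getLast?.getD init

/-- expectation of a history functional at time `t` -/
def Ehist (πC πR : Strat V) (init : V × V) (t : ℕ) (F : List (V × V) → ℝ≥0∞) : ℝ≥0∞ :=
  ∑' h, (play1 G πC πR init t) h * F h

lemma Ehist_zero (πC πR : Strat V) (init : V × V) (F : List (V × V) → ℝ≥0∞) :
    Ehist G πC πR init 0 F = F [init] := by
  rw [Ehist, play1, pureE]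

lemma Ehist_succ (πC πR : Strat V) (init : V × V) (t : ℕ) (F : List (V × V) → ℝ≥0∞) :
    Ehist G πC πR init (t+1) F =
      Ehist G πC πR init t (fun h => ∑' u, (πC h) u *
        ∑' w, (πR h) w * F (h ++ [step1 G (cur init h) u w])) := by
  rw [Ehist, play1, bindE, Ehist]
  refine tsum_congr fun h => ?_
  refine congrArg (_ * ·) ?_
  rw [bindE]
  refine tsum_congr fun u => ?_
  refine congrArg (_ * ·) ?_
  rw [bindE]
  refine tsum_congr fun w => ?_
  refine congrArg (_ * ·) ?_
  rw [pureE]; rfl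

lemma play1_support_length (πC πR : Strat V) (init : V × V) (t : ℕ) :
    ∀ h ∈ (play1 G πC πR init t).support, h.length = t + 1 := by
  induction t with
  | zero => intro h hh; rw [play1, PMF.support_pure] at hh; simp_all
  | succ t ih =>
    intro h hh
    rw [play1, PMF.support_bind] at hh
    simp only [Set.mem_iUnion] at hh
    obtain ⟨a, ha, hh⟩ := hh
    rw [PMF.support_bind] at hh
    simp only [Set.mem_iUnion] at hh
    obtain ⟨u, _, hh⟩ := hh
    rw [PMF.support_bind] at hh
    simp only [Set.mem_iUnion] at hh
    obtain ⟨w, _, hh⟩ := hh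
    rw [PMF.support_pure] at hh
    rw [Set.mem_singleton_iff] at hh
    subst hh
    simp [ih a ha]

lemma Ehist_mono_support (πC πR : Strat V) (init : V × V) (t : ℕ)
    {F F' : List (V × V) → ℝ≥0∞}
    (hFF : ∀ h ∈ (play1 G πC πR init t).support, F h ≤ F' h) :
    Ehist G πC πR init t F ≤ Ehist G πC πR init t F' := by
  refine ENNReal.tsum_le_tsum fun h => ?_
  by_cases hh : h ∈ (play1 G πC πR init t).support
  · exact mul_le_mul_right (hFF h hh) _
  · rw [(play1 G πC πR init t).apply_eq_zero_iff h |>.2 hh]; simp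

lemma Ehist_add (πC πR : Strat V) (init : V × V) (t : ℕ)
    (F F' : List (V × V) → ℝ≥0∞) :
    Ehist G πC πR init t (fun h => F h + F' h) =
      Ehist G πC πR init t F + Ehist G πC πR init t F' := by
  rw [Ehist, Ehist, Ehist, ← ENNReal.tsum_add]
  congr 1; funext h; rw [mul_add]

/-- the per-round cost: 1 while free, 0 after capture -/
def ind (p : V × V) : ℝ≥0∞ := if p.1 = p.2 then 0 else 1

lemma freeProb1_eq_Ehist (πC πR : Strat V) (init : V × V) (t : ℕ) :
    freeProb1 G πC πR init t = Ehist G πC πR init t (fun h => ind (cur init h)) := by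
  rw [freeProb1, PMF.toOuterMeasure_apply, Ehist]
  congr 1; funext h
  by_cases hc : (h.getLast?.getD init).1 = (h.getLast?.getD init).2
  · simp [Set.indicator, ind, cur, hc]
  · simp [Set.indicator, ind, cur, hc]

end Game
section Value

variable (G : SimpleGraph V) [DecidableRel G.Adj]

/-- the one-shot (matrix game) upper value at state `p` with continuation values `f` -/
def VAL (p : V × V) (f : V × V → ℝ≥0∞) : ℝ≥0∞ :=
  ⨅ μ : PMF V, ⨆ w : V, ∑' u, μ u * f (step1 G p u w)

lemma VAL_mono (p : V × V) {f g : V × V → ℝ≥0∞} (hfg : ∀ q, f q ≤ g q) :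
    VAL G p f ≤ VAL G p g :=
  iInf_mono fun _ => iSup_mono fun _ => ENNReal.tsum_le_tsum fun _ =>
    mul_le_mul_right (hfg _) _

/-- the `n`-stage value of the game -/
def vstage : ℕ → V × V → ℝ≥0∞
  | 0 => fun _ => 0
  | (n+1) => fun p => if p.1 = p.2 then 0 else 1 + VAL G p (vstage n)

lemma vstage_capt (n : ℕ) (p : V × V) (hp : p.1 = p.2) : vstage G n p = 0 := by
  cases n <;> simp [vstage, hp]

lemma vstage_free (n : ℕ) (p : V × V) (hp : ¬ p.1 = p.2) :
    vstage G (n+1) p = 1 + VAL G p (vstage G n) := by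
  simp [vstage, hp]

lemma step1_capt (p : V × V) (hp : p.1 = p.2) (u w : V) : step1 G p u w = p := by
  simp [step1, hp]

lemma vstage_succ_le (n : ℕ) (q : V × V) : vstage G n q ≤ vstage G (n+1) q := by
  induction n generalizing q with
  | zero => simp [vstage]
  | succ n ih =>
    by_cases hq : q.1 = q.2
    · simp [vstage_capt, hq]
    · rw [vstage_free G _ _ hq, vstage_free G _ _ hq]
      exact add_le_add_right (VAL_mono G q ih) 1

lemma vstage_mono : Monotone (vstage G) := by
  apply monotone_nat_of_le_succ
  intro n q
  exact vstage_succ_le G n q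

lemma vstage_le_nat (n : ℕ) (q : V × V) : vstage G n q ≤ (n : ℝ≥0∞) := by
  induction n generalizing q with
  | zero => simp [vstage]
  | succ n ih =>
    by_cases hq : q.1 = q.2
    · simp [vstage_capt, hq]
    · rw [vstage_free G _ _ hq]
      have hne : Nonempty V := ⟨q.1⟩
      have hval : VAL G q (vstage G n) ≤ (n : ℝ≥0∞) := by
        refine (iInf_le _ (PMF.pure q.1)).trans ?_
        refine iSup_le fun w => ?_
        calc ∑' u, (PMF.pure q.1) u * vstage G n (step1 G q u w)
            ≤ ∑' u, (PMF.pure q.1) u * (n : ℝ≥0∞) :=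
              ENNReal.tsum_le_tsum fun u => mul_le_mul_right (ih _) _
          _ = (n : ℝ≥0∞) := by rw [ENNReal.tsum_mul_right, PMF.tsum_coe, one_mul]
      calc 1 + VAL G q (vstage G n) ≤ 1 + (n : ℝ≥0∞) := add_le_add_right hval 1
        _ = ((n+1 : ℕ) : ℝ≥0∞) := by push_cast; ring
lemma vstage_ne_top (n : ℕ) (q : V × V) : vstage G n q ≠ ⊤ :=
  fun h => by simpa [h] using vstage_le_nat G n q

/-- the limit value -/
def vlim (p : V × V) : ℝ≥0∞ := ⨆ n, vstage G n p

lemma vstage_le_vlim (n : ℕ) (p : V × V) : vstage G n p ≤ vlim G p :=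
  le_iSup (fun n => vstage G n p) n

lemma vlim_capt (p : V × V) (hp : p.1 = p.2) : vlim G p = 0 := by
  simp [vlim, vstage_capt, hp]

lemma one_le_vlim (p : V × V) (hp : ¬ p.1 = p.2) : 1 ≤ vlim G p := by
  refine le_trans ?_ (vstage_le_vlim G 1 p)
  rw [vstage_free G 0 p hp]
  exact le_self_add

/-- monotone convergence for finite sums over `V` in `ℝ≥0∞` -/
lemma tsum_iSup_mono {g : ℕ → V → ℝ≥0∞} (hg : Monotone g) :
    ∑' u : V, ⨆ n, g n u = ⨆ n, ∑' u : V, g n u := by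
  have key : ∀ s : Finset V, ∑ u ∈ s, ⨆ n, g n u = ⨆ n, ∑ u ∈ s, g n u := by
    intro s
    induction s using Finset.induction with
    | empty => simp
    | @insert a s ha ih =>
      rw [Finset.sum_insert ha, ih]
      rw [ENNReal.iSup_add_iSup_of_monotone (fun _ _ hmn => hg hmn a)
        (fun _ _ hmn => Finset.sum_le_sum fun u _ => hg hmn u)]
      exact iSup_congr fun n => (Finset.sum_insert ha).symm
  calc ∑' u : V, ⨆ n, g n u = ∑ u : V, ⨆ n, g n u := tsum_fintype _
    _ = ⨆ n, ∑ u : V, g n u := key _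
    _ = ⨆ n, ∑' u : V, g n u := iSup_congr fun n => (tsum_fintype _).symm

end Value
/-! ### A minimax theorem for finite matrix games over `ℝ` -/

lemma cont_sup' {ι X : Type*} [TopologicalSpace X] (f : ι → X → ℝ) (hf : ∀ i, Continuous (f i)) :
    ∀ {s : Finset ι} (hs : s.Nonempty), Continuous (fun x => s.sup' hs fun i => f i x) := by
  intro s hs
  induction hs using Finset.Nonempty.cons_induction with
  | singleton a => simpa using hf a
  | cons a s h hs ih =>
    have : (fun x => (Finset.cons a s h).sup' (Finset.cons_nonempty h) fun i => f i x)
        = fun x => (f a x) ⊔ (s.sup' hs fun i => f i x) := by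
      funext x; exact Finset.sup'_cons hs _
    rw [this]; exact (hf a).max ih

lemma cont_inf' {ι X : Type*} [TopologicalSpace X] (f : ι → X → ℝ) (hf : ∀ i, Continuous (f i)) :
    ∀ {s : Finset ι} (hs : s.Nonempty), Continuous (fun x => s.inf' hs fun i => f i x) := by
  intro s hs
  induction hs using Finset.Nonempty.cons_induction with
  | singleton a => simpa using hf a
  | cons a s h hs ih =>
    have : (fun x => (Finset.cons a s h).inf' (Finset.cons_nonempty h) fun i => f i x)
        = fun x => (f a x) ⊓ (s.inf' hs fun i => f i x) := by
      funext x; exact Finset.inf'_cons hs _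
    rw [this]; exact (hf a).min ih

section Minimax

variable [Nonempty V]

set_option maxHeartbeats 1000000 in
lemma real_minimax (b : V → V → ℝ) :
    ∃ x₀ ∈ stdSimplex ℝ V, ∃ y ∈ stdSimplex ℝ V, ∀ u : V,
      (Finset.univ.sup' Finset.univ_nonempty fun w => ∑ u', x₀ u' * b u' w) ≤
        ∑ w, y w * b u w := by
  classical
  set S := stdSimplex ℝ V with hS
  have hSne : S.Nonempty := ⟨Pi.single (Classical.arbitrary V) 1,
    single_mem_stdSimplex ℝ _⟩
  have hL : ∀ w : V, Continuous fun x : V → ℝ => ∑ u, x u * b u w := fun w =>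
    continuous_finset_sum _ fun u _ => (continuous_apply u).mul continuous_const
  set M : (V → ℝ) → ℝ :=
    fun x => Finset.univ.sup' Finset.univ_nonempty fun w => ∑ u, x u * b u w with hM
  have hMc : Continuous M := cont_sup' (fun w (x : V → ℝ) => ∑ u, x u * b u w) hL _
  obtain ⟨x₀, hx₀S, hx₀min⟩ :=
    (isCompact_stdSimplex ℝ V).exists_isMinOn hSne hMc.continuousOn
  have key : ∀ c' : ℝ, c' < M x₀ → ∃ y ∈ S, ∀ u, c' ≤ ∑ w, y w * b u w := by
    intro c' hc'
    by_contra hcon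
    push_neg at hcon
    set g : (V → ℝ) → (V → ℝ) := fun y u => (∑ w, y w * b u w) - c' with hg
    have hgc : Continuous g := continuous_pi fun u =>
      (continuous_finset_sum _ fun w _ => (continuous_apply w).mul continuous_const).sub
        continuous_const
    set K := g '' S with hK
    have hKcv : Convex ℝ K := by
      rintro _ ⟨y1, hy1, rfl⟩ _ ⟨y2, hy2, rfl⟩ a a' ha ha' haa
      refine ⟨a • y1 + a' • y2, convex_stdSimplex ℝ V hy1 hy2 ha ha' haa, ?_⟩
      funext u
      simp only [hg, Pi.add_apply, Pi.smul_apply, smul_eq_mul]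
      have e1 : ∑ x, (a * y1 x + a' * y2 x) * b u x
          = a * (∑ w, y1 w * b u w) + a' * (∑ w, y2 w * b u w) := by
        simp only [add_mul, Finset.sum_add_distrib, Finset.mul_sum, mul_assoc]
      rw [e1]
      linear_combination c' * haa
    have hKcp : IsCompact K := (isCompact_stdSimplex ℝ V).image hgc
    have hOcv : Convex ℝ {x : V → ℝ | ∀ u, 0 ≤ x u} := by
      intro p hp q hq a a' ha ha' _
      intro u
      simp only [Pi.add_apply, Pi.smul_apply, smul_eq_mul]
      exact add_nonneg (mul_nonneg ha (hp u)) (mul_nonneg ha' (hq u))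
    have hOcl : IsClosed {x : V → ℝ | ∀ u, 0 ≤ x u} := by
      have : {x : V → ℝ | ∀ u, 0 ≤ x u} = ⋂ u, {x : V → ℝ | 0 ≤ x u} := by
        ext x; simp
      rw [this]
      exact isClosed_iInter fun u => isClosed_le continuous_const (continuous_apply u)
    have hdisj : Disjoint K {x : V → ℝ | ∀ u, 0 ≤ x u} := by
      rw [Set.disjoint_left]
      rintro _ ⟨y, hy, rfl⟩ hmem
      obtain ⟨u, hu⟩ := hcon y hy
      have h0 := hmem u
      simp only [hg, Set.mem_setOf_eq] at h0
      linarith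
    obtain ⟨f, s, t, hfs, hst, hft⟩ :=
      geometric_hahn_banach_compact_closed hKcv hKcp hOcv hOcl hdisj
    have h0mem : (0 : V → ℝ) ∈ {x : V → ℝ | ∀ u, 0 ≤ x u} := fun u => le_refl 0
    have ht0 : t < 0 := by
      have := hft 0 h0mem
      simpa using this
    have hfnn : ∀ z : V → ℝ, (∀ u, 0 ≤ z u) → 0 ≤ f z := by
      intro z hz
      by_contra hneg
      push_neg at hneg
      have hneg' : f z < 0 := hneg
      have hlam : 0 < (t - 1) / f z := div_pos_of_neg_of_neg (by linarith) hneg'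
      have hmem : (((t - 1) / f z) • z) ∈ {x : V → ℝ | ∀ u, 0 ≤ x u} := fun u => by
        simpa [smul_eq_mul] using mul_nonneg hlam.le (hz u)
      have h2 := hft _ hmem
      rw [map_smul, smul_eq_mul, div_mul_cancel₀ _ hneg'.ne] at h2
      linarith
    set μt : V → ℝ := fun u => f (Pi.single u 1) with hμt
    have hμnn : ∀ u, 0 ≤ μt u := by
      intro u
      refine hfnn _ ?_
      intro u'
      by_cases h : u' = u <;> simp [Pi.single_apply, h]
    have hf_eq : ∀ z : V → ℝ, f z = ∑ u, z u * μt u := by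
      intro z
      conv_lhs => rw [← univ_sum_single z]
      rw [map_sum]
      refine Finset.sum_congr rfl fun u _ => ?_
      have e : Pi.single u (z u) = z u • (Pi.single u 1 : V → ℝ) := by
        funext u'; by_cases h : u' = u <;> simp [Pi.single_apply, h]
      rw [e, map_smul, smul_eq_mul]
    have hKne : ∃ k ∈ K, True := ⟨g hSne.choose, ⟨hSne.choose, hSne.choose_spec, rfl⟩, trivial⟩
    have hμsum_pos : 0 < ∑ u, μt u := by
      rcases (Finset.sum_nonneg fun u _ => hμnn u).lt_or_eq with h | h
      · exact h
      · exfalso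
        have hall : ∀ u ∈ Finset.univ, μt u = 0 := by
          intro u hu
          have := Finset.sum_eq_zero_iff_of_nonneg (fun u _ => hμnn u) |>.1 h.symm
          exact this u hu
        obtain ⟨k, hk, -⟩ := hKne
        have hk2 := hfs k hk
        obtain ⟨y, hy, rfl⟩ := hk
        rw [hf_eq] at hk2
        have : ∑ u, g y u * μt u = 0 :=
          Finset.sum_eq_zero fun u hu => by rw [hall u hu, mul_zero]
        rw [this] at hk2
        linarith
    set T := ∑ u, μt u with hT
    set xh : V → ℝ := fun u => μt u / T with hxh
    have hxhS : xh ∈ S := by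
      constructor
      · exact fun u => div_nonneg (hμnn u) hμsum_pos.le
      · rw [← Finset.sum_div]
        field_simp
        exact hT.symm
    have hcol : ∀ w, ∑ u, xh u * b u w < c' := by
      intro w
      have h1 : f (g (Pi.single w 1)) < s :=
        hfs _ ⟨_, single_mem_stdSimplex ℝ w, rfl⟩
      rw [hf_eq] at h1
      have h2 : ∀ u, g (Pi.single w 1) u = b u w - c' := by
        intro u
        have e2 : ∑ w', (Pi.single w 1 : V → ℝ) w' * b u w' = b u w := by
          have e3 := Finset.sum_ite_eq' Finset.univ w (fun w' => b u w')
          simp only [Finset.mem_univ, if_true] at e3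
          rw [← e3]
          refine Finset.sum_congr rfl fun w' _ => ?_
          by_cases h : w' = w <;> simp [Pi.single_apply, h]
        simp only [hg]
        rw [e2]
      have h3 : ∑ u, (b u w - c') * μt u < s := by
        rw [show ∑ u, (b u w - c') * μt u = ∑ u, g (Pi.single w 1) u * μt u from
          Finset.sum_congr rfl fun u _ => by rw [h2 u]]
        exact h1
      have h4 : ∑ u, b u w * μt u < c' * T := by
        have e : ∑ u, (b u w - c') * μt u = (∑ u, b u w * μt u) - c' * T := by
          simp only [sub_mul, Finset.sum_sub_distrib, hT, Finset.mul_sum]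
        rw [e] at h3
        linarith
      rw [show ∑ u, xh u * b u w = (∑ u, b u w * μt u) / T from by
        rw [Finset.sum_div]; exact Finset.sum_congr rfl fun u _ => by
          simp only [hxh]; ring]
      rw [div_lt_iff₀ hμsum_pos]
      linarith [h4]
    have hMxh : M xh < c' := by
      rw [hM]
      exact (Finset.sup'_lt_iff _).2 fun w _ => hcol w
    have hle : M x₀ ≤ M xh := hx₀min hxhS
    linarith
  set H : (V → ℝ) → ℝ :=
    fun y => Finset.univ.inf' Finset.univ_nonempty fun u => ∑ w, y w * b u w with hH
  have hHc : Continuous H := cont_inf' (fun u (y : V → ℝ) => ∑ w, y w * b u w)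
    (fun u => continuous_finset_sum _ fun w _ => (continuous_apply w).mul continuous_const) _
  obtain ⟨ys, hysS, hysmax⟩ :=
    (isCompact_stdSimplex ℝ V).exists_isMaxOn hSne hHc.continuousOn
  have hfin : M x₀ ≤ H ys := by
    by_contra hlt
    push_neg at hlt
    obtain ⟨c', hc1, hc2⟩ := exists_between hlt
    obtain ⟨y, hyS, hy⟩ := key c' hc2
    have : c' ≤ H y := (Finset.le_inf'_iff _ _).2 fun u _ => hy u
    have h2 : H y ≤ H ys := hysmax hyS
    linarith
  exact ⟨x₀, hx₀S, ys, hysS, fun u =>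
    hfin.trans (Finset.inf'_le _ (Finset.mem_univ u))⟩

end Minimax
/-! ### Bridging `ℝ≥0∞` expectations with real simplex expectations -/

def pmfOfSimplex (x : V → ℝ) (hx : x ∈ stdSimplex ℝ V) : PMF V :=
  PMF.ofFintype (fun v => ENNReal.ofReal (x v))
    (by rw [← ENNReal.ofReal_sum_of_nonneg (fun i _ => hx.1 i), hx.2, ENNReal.ofReal_one])

lemma pmfOfSimplex_exp (x : V → ℝ) (hx : x ∈ stdSimplex ℝ V) (c : V → ℝ≥0∞)
    (hc : ∀ v, c v ≠ ⊤) :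
    ∑' v, (pmfOfSimplex x hx) v * c v = ENNReal.ofReal (∑ v, x v * (c v).toReal) := by
  rw [tsum_fintype,
    ENNReal.ofReal_sum_of_nonneg (fun i _ => mul_nonneg (hx.1 i) ENNReal.toReal_nonneg)]
  refine Finset.sum_congr rfl fun v _ => ?_
  rw [pmfOfSimplex, PMF.ofFintype_apply, ENNReal.ofReal_mul (hx.1 v),
    ENNReal.ofReal_toReal (hc v)]

lemma simplexOfPMF (μ : PMF V) : (fun u => (μ u).toReal) ∈ stdSimplex ℝ V := by
  constructor
  · exact fun u => ENNReal.toReal_nonneg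
  · have h := μ.tsum_coe
    rw [tsum_fintype] at h
    rw [← ENNReal.toReal_sum (fun a _ => PMF.apply_ne_top _ _), h, ENNReal.toReal_one]

lemma pmf_exp_toReal (μ : PMF V) (c : V → ℝ≥0∞) (hc : ∀ v, c v ≠ ⊤) :
    (∑' v, μ v * c v).toReal = ∑ v, (μ v).toReal * (c v).toReal := by
  rw [tsum_fintype, ENNReal.toReal_sum (fun a _ =>
    ENNReal.mul_ne_top (PMF.apply_ne_top _ _) (hc a))]
  exact Finset.sum_congr rfl fun v _ => ENNReal.toReal_mul

section OptStrategies

variable (G : SimpleGraph V) [DecidableRel G.Adj] [Nonempty V]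

/-- the robber has an optimal mixed action in each one-shot game -/
lemma exists_rob_opt (p : V × V) (f : V × V → ℝ≥0∞) (hf : ∀ q, f q ≠ ⊤) :
    ∃ ν : PMF V, ∀ u, VAL G p f ≤ ∑' w, ν w * f (step1 G p u w) := by
  obtain ⟨x₀, hx₀, y, hy, hxy⟩ := real_minimax (fun u w => (f (step1 G p u w)).toReal)
  refine ⟨pmfOfSimplex y hy, fun u => ?_⟩
  rw [pmfOfSimplex_exp y hy _ (fun w => hf _)]
  have h1 : VAL G p f ≤ ENNReal.ofReal
      (Finset.univ.sup' Finset.univ_nonempty fun w =>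
        ∑ u', x₀ u' * (f (step1 G p u' w)).toReal) := by
    refine (iInf_le _ (pmfOfSimplex x₀ hx₀)).trans ?_
    refine iSup_le fun w => ?_
    rw [pmfOfSimplex_exp x₀ hx₀ _ (fun u' => hf _)]
    exact ENNReal.ofReal_le_ofReal
      (Finset.le_sup' (fun w => ∑ u', x₀ u' * (f (step1 G p u' w)).toReal)
        (Finset.mem_univ w))
  exact h1.trans (ENNReal.ofReal_le_ofReal (hxy u))

/-- the cop has a mixed action that is simultaneously good against all finite-stage
values -/
lemma exists_cop_opt (p : V × V) (hfree : ¬ p.1 = p.2) (hfin : vlim G p ≠ ⊤) :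
    ∃ μ : PMF V, ∀ n w, ∑' u, μ u * vstage G n (step1 G p u w) ≤ vlim G p - 1 := by
  set c := vlim G p - 1 with hc'
  have hc : c ≠ ⊤ := ENNReal.sub_ne_top hfin
  have hVAL : ∀ n, VAL G p (vstage G n) ≤ c := by
    intro n
    refine ENNReal.le_sub_of_add_le_left (by simp) ?_
    rw [← vstage_free G n p hfree]
    exact vstage_le_vlim G (n+1) p
  have hsel : ∀ n : ℕ, ∃ μ : PMF V, ∀ w,
      ∑' u, μ u * vstage G n (step1 G p u w) ≤ c + ENNReal.ofReal (1/(n+1)) := by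
    intro n
    have hpos : ENNReal.ofReal (1/((n:ℝ)+1)) ≠ 0 :=
      ne_of_gt (ENNReal.ofReal_pos.2 (by positivity))
    have hlt : VAL G p (vstage G n) < c + ENNReal.ofReal (1/((n:ℝ)+1)) :=
      (hVAL n).trans_lt (ENNReal.lt_add_right hc hpos)
    rw [VAL, iInf_lt_iff] at hlt
    obtain ⟨μ, hμ⟩ := hlt
    exact ⟨μ, fun w =>
      (le_iSup (fun w => ∑' u, μ u * vstage G n (step1 G p u w)) w).trans hμ.le⟩
  choose μs hμs using hsel
  set r := c.toReal with hr
  set xs : ℕ → V → ℝ := fun n u => (μs n u).toReal with hxs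
  have hxsS : ∀ n, xs n ∈ stdSimplex ℝ V := fun n => simplexOfPMF (μs n)
  have hbd : ∀ n w, ∑ u, xs n u * (vstage G n (step1 G p u w)).toReal ≤ r + 1/((n:ℝ)+1) := by
    intro n w
    have h2 : (∑' u, μs n u * vstage G n (step1 G p u w)).toReal
        ≤ (c + ENNReal.ofReal (1/((n:ℝ)+1))).toReal :=
      ENNReal.toReal_mono (ENNReal.add_ne_top.2 ⟨hc, ENNReal.ofReal_ne_top⟩) (hμs n w)
    rw [ENNReal.toReal_add hc ENNReal.ofReal_ne_top,
      ENNReal.toReal_ofReal (by positivity)] at h2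
    rw [pmf_exp_toReal (μs n) _ (fun u => vstage_ne_top G n _)] at h2
    exact h2
  obtain ⟨xlim, hxlimS, φ, hφ, hconv⟩ := (isCompact_stdSimplex ℝ V).tendsto_subseq hxsS
  have hlim : ∀ m w, ∑ u, xlim u * (vstage G m (step1 G p u w)).toReal ≤ r := by
    intro m w
    set F : (V → ℝ) → ℝ := fun x => ∑ u, x u * (vstage G m (step1 G p u w)).toReal with hF
    have hcont : Continuous F :=
      continuous_finset_sum _ fun u _ => (continuous_apply u).mul continuous_const
    have h1 : Tendsto (fun k => F (xs (φ k)) - 1/((φ k : ℝ)+1)) atTop (𝓝 (F xlim - 0)) := by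
      refine Tendsto.sub ((hcont.tendsto xlim).comp hconv) ?_
      exact tendsto_one_div_add_atTop_nhds_zero_nat.comp hφ.tendsto_atTop
    have h2 : ∀ᶠ k in atTop, F (xs (φ k)) - 1/((φ k : ℝ)+1) ≤ r := by
      refine eventually_atTop.2 ⟨m, fun k hk => ?_⟩
      have hmk : m ≤ φ k := hk.trans hφ.le_apply
      have hmono : F (xs (φ k)) ≤ ∑ u, xs (φ k) u * (vstage G (φ k) (step1 G p u w)).toReal := by
        refine Finset.sum_le_sum fun u _ => ?_
        refine mul_le_mul_of_nonneg_left ?_ ((hxsS (φ k)).1 u)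
        exact ENNReal.toReal_mono (vstage_ne_top G _ _) (vstage_mono G hmk _)
      have := (hmono.trans (hbd (φ k) w))
      linarith
    have := le_of_tendsto h1 h2
    simpa using this
  refine ⟨pmfOfSimplex xlim hxlimS, fun m w => ?_⟩
  rw [pmfOfSimplex_exp xlim hxlimS _ (fun u => vstage_ne_top G m _)]
  calc ENNReal.ofReal (∑ u, xlim u * (vstage G m (step1 G p u w)).toReal)
      ≤ ENNReal.ofReal r := ENNReal.ofReal_le_ofReal (hlim m w)
    _ = c := ENNReal.ofReal_toReal hc

end OptStrategies
section Strategies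

variable (G : SimpleGraph V) [DecidableRel G.Adj] [Nonempty V]

/-- an optimal stationary mixed action for the cop -/
def copMix (p : V × V) : PMF V :=
  if h : ¬ p.1 = p.2 ∧ vlim G p ≠ ⊤ then (exists_cop_opt G p h.1 h.2).choose
  else PMF.pure p.1

lemma copMix_spec (p : V × V) (h1 : ¬ p.1 = p.2) (h2 : vlim G p ≠ ⊤) :
    ∀ n w, ∑' u, copMix G p u * vstage G n (step1 G p u w) ≤ vlim G p - 1 := by
  have he : copMix G p = (exists_cop_opt G p h1 h2).choose := dif_pos ⟨h1, h2⟩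
  rw [he]
  exact (exists_cop_opt G p h1 h2).choose_spec

/-- an optimal mixed action for the robber in the `n+1`-stage game -/
def robMix (p : V × V) (n : ℕ) : PMF V :=
  (exists_rob_opt G p (vstage G n) (vstage_ne_top G n)).choose

lemma robMix_spec (p : V × V) (n : ℕ) :
    ∀ u, VAL G p (vstage G n) ≤ ∑' w, robMix G p n w * vstage G n (step1 G p u w) :=
  (exists_rob_opt G p (vstage G n) (vstage_ne_top G n)).choose_spec

lemma tsum_swap_mul (a b : V → ℝ≥0∞) (X : V → V → ℝ≥0∞) :
    ∑' u, a u * ∑' w, b w * X u w = ∑' w, b w * ∑' u, a u * X u w := by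
  calc ∑' u, a u * ∑' w, b w * X u w = ∑' u, ∑' w, a u * (b w * X u w) := by
        refine tsum_congr fun u => ?_; rw [← ENNReal.tsum_mul_left]
    _ = ∑' w, ∑' u, a u * (b w * X u w) := ENNReal.tsum_comm
    _ = ∑' w, b w * ∑' u, a u * X u w := by
        refine tsum_congr fun w => ?_
        rw [← ENNReal.tsum_mul_left]
        refine tsum_congr fun u => ?_
        ring

lemma cop_step (p : V × V) (ν : PMF V) :
    (∑' u, copMix G p u * ∑' w, ν w * vlim G (step1 G p u w)) + ind p ≤ vlim G p := by
  by_cases hp : p.1 = p.2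
  · have hstep : ∀ u w, vlim G (step1 G p u w) = 0 := fun u w => by
      rw [step1_capt G p hp, vlim_capt G p hp]
    simp [ind, hp, hstep, vlim_capt G p hp]
  · by_cases htop : vlim G p = ⊤
    · rw [htop]; exact le_top
    · have key : ∀ w, ∑' u, copMix G p u * vlim G (step1 G p u w) ≤ vlim G p - 1 := by
        intro w
        have e : ∑' u, copMix G p u * vlim G (step1 G p u w)
            = ⨆ n, ∑' u, copMix G p u * vstage G n (step1 G p u w) := by
          rw [show (fun u => copMix G p u * vlim G (step1 G p u w))
              = fun u => ⨆ n, copMix G p u * vstage G n (step1 G p u w) from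
            funext fun u => by rw [vlim, ENNReal.mul_iSup]]
          exact tsum_iSup_mono (fun m n hmn u => mul_le_mul_right (vstage_mono G hmn _) _)
        rw [e]
        exact iSup_le fun n => copMix_spec G p hp htop n w
      calc (∑' u, copMix G p u * ∑' w, ν w * vlim G (step1 G p u w)) + ind p
          ≤ (vlim G p - 1) + 1 := by
            refine add_le_add ?_ (by simp [ind, hp])
            calc ∑' u, copMix G p u * ∑' w, ν w * vlim G (step1 G p u w)
                = ∑' w, ν w * ∑' u, copMix G p u * vlim G (step1 G p u w) :=
                  tsum_swap_mul _ _ _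
              _ ≤ ∑' w, ν w * (vlim G p - 1) :=
                  ENNReal.tsum_le_tsum fun w => mul_le_mul_right (key w) _
              _ = vlim G p - 1 := by rw [ENNReal.tsum_mul_right, PMF.tsum_coe, one_mul]
        _ = vlim G p := tsub_add_cancel_of_le (one_le_vlim G p hp)

lemma rob_step (p : V × V) (n : ℕ) (μ : PMF V) :
    vstage G (n+1) p ≤
      (∑' u, μ u * ∑' w, robMix G p n w * vstage G n (step1 G p u w)) + ind p := by
  by_cases hp : p.1 = p.2
  · simp [vstage_capt G _ p hp]
  · rw [vstage_free G n p hp]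
    have hE : VAL G p (vstage G n)
        ≤ ∑' u, μ u * ∑' w, robMix G p n w * vstage G n (step1 G p u w) := by
      calc VAL G p (vstage G n) = ∑' u : V, μ u * VAL G p (vstage G n) := by
            rw [ENNReal.tsum_mul_right, PMF.tsum_coe, one_mul]
        _ ≤ _ := ENNReal.tsum_le_tsum fun u => mul_le_mul_right (robMix_spec G p n u) _
    calc 1 + VAL G p (vstage G n)
        ≤ 1 + ∑' u, μ u * ∑' w, robMix G p n w * vstage G n (step1 G p u w) :=
          add_le_add_right hE 1
      _ = (∑' u, μ u * ∑' w, robMix G p n w * vstage G n (step1 G p u w)) + ind p := by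
          rw [ind, if_neg hp, add_comm]

lemma cur_concat (init : V × V) (h : List (V × V)) (x : V × V) :
    cur init (h ++ [x]) = x := by
  simp [cur, List.getLast?_concat]

lemma cur_nil (init : V × V) : cur init [init] = [init].getLast?.getD init := rfl

lemma cop_tel (init : V × V) (πC πR : Strat V)
    (hC : ∀ h, πC h = copMix G (cur init h)) (n : ℕ) :
    (∑ t ∈ Finset.range n, freeProb1 G πC πR init t) +
      Ehist G πC πR init n (fun h => vlim G (cur init h)) ≤ vlim G init := by
  induction n with
  | zero => simp [Ehist_zero, cur]
  | succ n ih =>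
    have hstep : freeProb1 G πC πR init n +
        Ehist G πC πR init (n+1) (fun h => vlim G (cur init h))
        ≤ Ehist G πC πR init n (fun h => vlim G (cur init h)) := by
      rw [freeProb1_eq_Ehist, Ehist_succ, ← Ehist_add]
      refine Ehist_mono_support G πC πR init n ?_
      intro h _
      have e : (∑' u, (πC h) u * ∑' w, (πR h) w *
            vlim G (cur init (h ++ [step1 G (cur init h) u w])))
          = ∑' u, copMix G (cur init h) u * ∑' w, (πR h) w *
            vlim G (step1 G (cur init h) u w) := by
        rw [hC h]
        refine tsum_congr fun u => congrArg _ (tsum_congr fun w => ?_)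
        rw [cur_concat]
      calc ind (cur init h) + ∑' u, (πC h) u * ∑' w, (πR h) w *
            vlim G (cur init (h ++ [step1 G (cur init h) u w]))
          = (∑' u, copMix G (cur init h) u * ∑' w, (πR h) w *
            vlim G (step1 G (cur init h) u w)) + ind (cur init h) := by
            rw [e, add_comm]
        _ ≤ vlim G (cur init h) := cop_step G (cur init h) (πR h)
    calc (∑ t ∈ Finset.range (n+1), freeProb1 G πC πR init t) +
          Ehist G πC πR init (n+1) (fun h => vlim G (cur init h))
        = (∑ t ∈ Finset.range n, freeProb1 G πC πR init t) +
          (freeProb1 G πC πR init n +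
            Ehist G πC πR init (n+1) (fun h => vlim G (cur init h))) := by
          rw [Finset.sum_range_succ, add_assoc]
      _ ≤ (∑ t ∈ Finset.range n, freeProb1 G πC πR init t) +
          Ehist G πC πR init n (fun h => vlim G (cur init h)) := add_le_add_right hstep _
      _ ≤ vlim G init := ih

lemma rob_tel (init : V × V) (n : ℕ) (πC πR : Strat V)
    (hR : ∀ h, πR h = robMix G (cur init h) (n - h.length)) :
    ∀ k ≤ n, vstage G n init ≤ (∑ t ∈ Finset.range k, freeProb1 G πC πR init t) +
      Ehist G πC πR init k (fun h => vstage G (n - k) (cur init h)) := by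
  intro k
  induction k with
  | zero => intro _; simp [Ehist_zero, cur]
  | succ k ih =>
    intro hk1
    have hk : k ≤ n := Nat.le_of_succ_le hk1
    have hstep : Ehist G πC πR init k (fun h => vstage G (n - k) (cur init h))
        ≤ freeProb1 G πC πR init k +
          Ehist G πC πR init (k+1) (fun h => vstage G (n - (k+1)) (cur init h)) := by
      rw [freeProb1_eq_Ehist, Ehist_succ, ← Ehist_add]
      refine Ehist_mono_support G πC πR init k ?_
      intro h hh
      have hlen : h.length = k + 1 := play1_support_length G πC πR init k h hh
      have hπ : πR h = robMix G (cur init h) (n - (k+1)) := by rw [hR h, hlen]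
      have e : (∑' u, (πC h) u * ∑' w, (πR h) w *
            vstage G (n - (k+1)) (cur init (h ++ [step1 G (cur init h) u w])))
          = ∑' u, (πC h) u * ∑' w, robMix G (cur init h) (n - (k+1)) w *
            vstage G (n - (k+1)) (step1 G (cur init h) u w) := by
        rw [hπ]
        refine tsum_congr fun u => congrArg _ (tsum_congr fun w => ?_)
        rw [cur_concat]
      have hnk : n - k = (n - (k+1)) + 1 := by omega
      rw [hnk]
      calc vstage G ((n - (k+1)) + 1) (cur init h)
          ≤ (∑' u, (πC h) u * ∑' w, robMix G (cur init h) (n - (k+1)) w *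
              vstage G (n - (k+1)) (step1 G (cur init h) u w)) + ind (cur init h) :=
            rob_step G (cur init h) (n - (k+1)) (πC h)
        _ = ind (cur init h) + ∑' u, (πC h) u * ∑' w, (πR h) w *
              vstage G (n - (k+1)) (cur init (h ++ [step1 G (cur init h) u w])) := by
            rw [e, add_comm]
    calc vstage G n init
        ≤ (∑ t ∈ Finset.range k, freeProb1 G πC πR init t) +
          Ehist G πC πR init k (fun h => vstage G (n - k) (cur init h)) := ih hk
      _ ≤ (∑ t ∈ Finset.range k, freeProb1 G πC πR init t) +
          (freeProb1 G πC πR init k +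
            Ehist G πC πR init (k+1) (fun h => vstage G (n - (k+1)) (cur init h))) :=
          add_le_add_right hstep _
      _ = (∑ t ∈ Finset.range (k+1), freeProb1 G πC πR init t) +
          Ehist G πC πR init (k+1) (fun h => vstage G (n - (k+1)) (cur init h)) := by
          rw [Finset.sum_range_succ, add_assoc]

lemma cop_payoff (init : V × V) (πC πR : Strat V)
    (hC : ∀ h, πC h = copMix G (cur init h)) :
    payoff G πC πR init ≤ vlim G init := by
  rw [payoff, ENNReal.tsum_eq_iSup_nat]
  refine iSup_le fun n => ?_
  exact le_self_add.trans (cop_tel G init πC πR hC n)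

lemma rob_payoff (init : V × V) (n : ℕ) (πC πR : Strat V)
    (hR : ∀ h, πR h = robMix G (cur init h) (n - h.length)) :
    vstage G n init ≤ payoff G πC πR init := by
  have h1 := rob_tel G init n πC πR hR n le_rfl
  have h2 : Ehist G πC πR init n (fun h => vstage G (n - n) (cur init h)) = 0 := by
    have : ∀ h, vstage G (n - n) (cur init h) = 0 := fun h => by
      rw [Nat.sub_self]; rfl
    simp only [Ehist, this, mul_zero, tsum_zero]
  rw [h2, add_zero] at h1
  refine h1.trans ?_
  rw [payoff]
  exact ENNReal.sum_le_tsum _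

end Strategies

/-- the single-cop concurrent cops and robber game with the
expected-capture-time payoff has a value from every initial position. -/
theorem cccr_has_value (G : SimpleGraph V) [DecidableRel G.Adj] (hconn : G.Connected) :
    ∀ init : V × V,
      (⨅ πC : Strat V, ⨆ πR : Strat V, payoff G πC πR init) =
        (⨆ πR : Strat V, ⨅ πC : Strat V, payoff G πC πR init) := by
  intro init
  haveI : Nonempty V := ⟨init.1⟩
  refine le_antisymm ?_ ?_
  · -- upper value ≤ vlim ≤ lower value
    have h1 : (⨅ πC : Strat V, ⨆ πR : Strat V, payoff G πC πR init) ≤ vlim G init := by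
      refine (iInf_le _ (fun h => copMix G (cur init h))).trans ?_
      exact iSup_le fun πR => cop_payoff G init _ πR (fun h => rfl)
    have h2 : vlim G init ≤ ⨆ πR : Strat V, ⨅ πC : Strat V, payoff G πC πR init := by
      rw [vlim]
      refine iSup_le fun n => ?_
      refine le_trans ?_ (le_iSup _ (fun h => robMix G (cur init h) (n - h.length)))
      exact le_iInf fun πC => rob_payoff G init n πC _ (fun h => rfl)
    exact h1.trans h2
  · refine le_iInf fun πC => iSup_le fun πR => ?_
    exact (iInf_le _ πC).trans (le_iSup (fun πR' => payoff G πC πR' init) πR)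
end
end
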